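/- Let n and m be positive integers, let K ⊂ ℝ^n be compact, and let F : ℝ^n → ℝ^m be continuously differentiable. Assume F is injective on K and that the derivative DF(x) : ℝ^n → ℝ^m is an injective linear map for every x ∈ K. Then F satisfies a Lipschitz stability estimate on K: there exists a constant C > 0 such that for all x, y ∈ K, ‖x − y‖ ≤ C · ‖F(x) − F(y)‖. -/

import Mathlib

open Metric Set

lemma aux_local {E G : Type*} [NormedAddCommGroup E] [NormedSpace ℝ E] [FiniteDimensional ℝ E]
    [NormedAddCommGroup G] [NormedSpace ℝ G]
    {F : E → G} (hF : ContDiff ℝ 1 F) (x₀ : E)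
    (hDF : Function.Injective (fderiv ℝ F x₀)) :
    ∃ r > 0, ∃ c > 0, ∀ x ∈ ball x₀ r, ∀ y ∈ ball x₀ r, ‖x - y‖ ≤ c * ‖F x - F y‖ := by
  set f' := fderiv ℝ F x₀ with hf'
  obtain ⟨Kc, Kpos, H⟩ := (f' : E →ₗ[ℝ] G).injective_iff_antilipschitz.mp hDF
  have hstrict : HasStrictFDerivAt F f' x₀ := hF.contDiffAt.hasStrictFDerivAt one_ne_zero
  have hc : (0 : NNReal) < Kc⁻¹ / 2 := by positivity
  obtain ⟨s, hs, happ⟩ := hstrict.approximates_deriv_on_nhds (Or.inr hc)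
  obtain ⟨r, hr, hball⟩ := Metric.mem_nhds_iff.mp hs
  have hk : (0:ℝ) < Kc := Kpos
  refine ⟨r, hr, 2 * (Kc:ℝ), by positivity, fun x hx y hy => ?_⟩
  have h1 : ‖x - y‖ ≤ Kc * ‖f' (x - y)‖ := by
    have := H.le_mul_dist (x - y) 0
    simpa [dist_eq_norm, map_zero] using this
  have h2 : ‖F x - F y - f' (x - y)‖ ≤ (Kc:ℝ)⁻¹ / 2 * ‖x - y‖ := by
    have := happ x (hball hx) y (hball hy)
    have hcoe : ((Kc⁻¹ / 2 : NNReal) : ℝ) = (Kc:ℝ)⁻¹ / 2 := by push_cast; ring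
    rwa [hcoe] at this
  have h3 : ‖f' (x - y)‖ - ‖F x - F y‖ ≤ (Kc:ℝ)⁻¹ / 2 * ‖x - y‖ := by
    have hn : ‖f' (x - y)‖ - ‖F x - F y‖ ≤ ‖F x - F y - f' (x - y)‖ := by
      have := norm_sub_norm_le (f' (x - y)) (F x - F y)
      have h4 : ‖f' (x - y) - (F x - F y)‖ = ‖F x - F y - f' (x - y)‖ := norm_sub_rev _ _
      linarith
    linarith
  have hinv : (Kc:ℝ) * (Kc:ℝ)⁻¹ = 1 := mul_inv_cancel₀ hk.ne'
  nlinarith [mul_le_mul_of_nonneg_left h3 hk.le, norm_nonneg (x - y), norm_nonneg (F x - F y)]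

/-- finite-dimensional stability principle: a continuously
differentiable map that is injective on a compact set `K` and whose Fréchet
derivative is injective at every point of `K` satisfies a Lipschitz stability
estimate `‖x − y‖ ≤ C‖F(x) − F(y)‖` on `K`. -/
theorem stmt_19 (n m : ℕ) (hn : 0 < n) (hm : 0 < m)
    (K : Set (EuclideanSpace ℝ (Fin n))) (hK : IsCompact K)
    (F : EuclideanSpace ℝ (Fin n) → EuclideanSpace ℝ (Fin m))
    (hF : ContDiff ℝ 1 F) (hinj : Set.InjOn F K)
    (hDF : ∀ x ∈ K, Function.Injective (fderiv ℝ F x)) :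
    ∃ C : ℝ, 0 < C ∧ ∀ x ∈ K, ∀ y ∈ K, ‖x - y‖ ≤ C * ‖F x - F y‖ := by
  classical
  rcases K.eq_empty_or_nonempty with hKe | hKne
  · exact ⟨1, one_pos, by simp [hKe]⟩
  have claim : ∀ x₀ : EuclideanSpace ℝ (Fin n), ∃ p : ℝ × ℝ, 0 < p.1 ∧ 0 < p.2 ∧
      (x₀ ∈ K → ∀ x ∈ ball x₀ p.1, ∀ y ∈ ball x₀ p.1, ‖x - y‖ ≤ p.2 * ‖F x - F y‖) := by
    intro x₀
    by_cases hx₀ : x₀ ∈ K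
    · obtain ⟨r, hr, c, hcp, H⟩ := aux_local hF x₀ (hDF x₀ hx₀)
      exact ⟨(r, c), hr, hcp, fun _ => H⟩
    · exact ⟨(1, 1), one_pos, one_pos, fun h => absurd h hx₀⟩
  choose p hr hcp Hloc using claim
  set r := fun x => (p x).1 with hrdef
  set c := fun x => (p x).2 with hcdef
  obtain ⟨t, htK, hcover⟩ := hK.elim_nhds_subcover (fun x => ball x (r x / 2))
      (fun x hx => ball_mem_nhds x (by have := hr x; positivity))
  have htne : t.Nonempty := by
    obtain ⟨x, hx⟩ := hKne
    have h := hcover hx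
    simp only [Set.mem_iUnion] at h
    obtain ⟨i, hi, -⟩ := h
    exact ⟨i, hi⟩
  set δ := t.inf' htne (fun x => r x / 2) with hδdef
  have hδ : 0 < δ := by
    rw [hδdef, Finset.lt_inf'_iff]
    intro b _
    have := hr b
    positivity
  set c₀ := t.sup' htne c with hc₀def
  have hc₀ : 0 < c₀ := by
    obtain ⟨i, hi⟩ := htne
    exact lt_of_lt_of_le (hcp i) (Finset.le_sup' c hi)
  have close : ∀ x ∈ K, ∀ y ∈ K, dist x y < δ → ‖x - y‖ ≤ c₀ * ‖F x - F y‖ := by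
    intro x hx y hy hxy
    have h := hcover hx
    simp only [Set.mem_iUnion] at h
    obtain ⟨i, hi, hxi⟩ := h
    have hδle : δ ≤ r i / 2 := Finset.inf'_le _ hi
    rw [mem_ball] at hxi
    have hyi : y ∈ ball i (r i) := by
      rw [mem_ball]
      have htr : dist y i ≤ dist y x + dist x i := dist_triangle _ _ _
      rw [dist_comm] at hxy
      linarith
    have hxi' : x ∈ ball i (r i) := by
      rw [mem_ball]
      have := hr i
      linarith
    calc ‖x - y‖ ≤ c i * ‖F x - F y‖ := Hloc i (htK i hi) x hxi' y hyi
      _ ≤ c₀ * ‖F x - F y‖ :=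
        mul_le_mul_of_nonneg_right (Finset.le_sup' c hi) (norm_nonneg _)
  set S := (K ×ˢ K) ∩ {q : EuclideanSpace ℝ (Fin n) × EuclideanSpace ℝ (Fin n) |
      δ ≤ dist q.1 q.2} with hSdef
  by_cases hS : S.Nonempty
  · have hScomp : IsCompact S :=
      (hK.prod hK).inter_right (isClosed_le continuous_const (continuous_fst.dist continuous_snd))
    have hgcont : ContinuousOn (fun q : EuclideanSpace ℝ (Fin n) × EuclideanSpace ℝ (Fin n) =>
        ‖F q.1 - F q.2‖) S :=
      (((hF.continuous.comp continuous_fst).sub (hF.continuous.comp continuous_snd)).norm).continuousOn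
    obtain ⟨q₀, hq₀, hmin⟩ := hScomp.exists_isMinOn hS hgcont
    have hq₀K : q₀.1 ∈ K ∧ q₀.2 ∈ K := ⟨hq₀.1.1, hq₀.1.2⟩
    have hq₀ne : q₀.1 ≠ q₀.2 := by
      intro h
      have : δ ≤ dist q₀.1 q₀.2 := hq₀.2
      rw [h, dist_self] at this
      linarith
    have hε : 0 < ‖F q₀.1 - F q₀.2‖ := by
      rw [norm_pos_iff, sub_ne_zero]
      exact fun h => hq₀ne (hinj hq₀K.1 hq₀K.2 h)
    set ε := ‖F q₀.1 - F q₀.2‖ with hεdef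
    obtain ⟨R, hR⟩ := hK.isBounded.subset_closedBall 0
    have hD : ∀ x ∈ K, ∀ y ∈ K, ‖x - y‖ ≤ 2 * R := by
      intro x hx y hy
      have h1 : ‖x‖ ≤ R := by simpa using hR hx
      have h2 : ‖y‖ ≤ R := by simpa using hR hy
      calc ‖x - y‖ ≤ ‖x‖ + ‖y‖ := norm_sub_le _ _
        _ ≤ 2 * R := by linarith
    refine ⟨max c₀ (2 * R / ε), lt_of_lt_of_le hc₀ (le_max_left _ _), fun x hx y hy => ?_⟩
    by_cases hd : dist x y < δ
    · calc ‖x - y‖ ≤ c₀ * ‖F x - F y‖ := close x hx y hy hd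
        _ ≤ max c₀ (2 * R / ε) * ‖F x - F y‖ :=
          mul_le_mul_of_nonneg_right (le_max_left _ _) (norm_nonneg _)
    · have hxyS : (x, y) ∈ S := ⟨⟨hx, hy⟩, not_lt.mp hd⟩
      have hεle : ε ≤ ‖F x - F y‖ := isMinOn_iff.mp hmin (x, y) hxyS
      have hRpos : 0 < 2 * R := by
        have := hD q₀.1 hq₀K.1 q₀.2 hq₀K.2
        have hq : 0 < ‖q₀.1 - q₀.2‖ := by
          rw [norm_pos_iff, sub_ne_zero]; exact hq₀ne
        linarith
      calc ‖x - y‖ ≤ 2 * R := hD x hx y hy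
        _ = (2 * R / ε) * ε := by field_simp
        _ ≤ (2 * R / ε) * ‖F x - F y‖ :=
          mul_le_mul_of_nonneg_left hεle (by positivity)
        _ ≤ max c₀ (2 * R / ε) * ‖F x - F y‖ :=
          mul_le_mul_of_nonneg_right (le_max_right _ _) (norm_nonneg _)
  · refine ⟨c₀, hc₀, fun x hx y hy => ?_⟩
    have hd : dist x y < δ := by
      by_contra h
      exact hS ⟨(x, y), ⟨hx, hy⟩, not_lt.mp h⟩
    exact close x hx y hy hd
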